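/- arXiv:1809.00568 — 2 statements merged into one kernel-verified Lean document; each statement's English description precedes it below -/
import Mathlib

section
/- Let q = p^e with e ≥ 2 and p a prime with p ≡ 1 (mod 4), and take k = 1. Then for every integer l with 1 ≤ l ≤ (p-5)/4 there exists a negacyclic code over F_q that is a 1-Galois LCD MDS code with length (p-1)/2, dimension (p-1)/2 - 2l, and minimum Hamming distance 2l + 1. -/
open Finset

/-- The `k`-Galois dual of a linear code `C ⊆ F_q^n`, where `q = p^e`:
`C^{⊥_k} = {x | ∀ c ∈ C, ∑ i, c i * (x i)^(p^k) = 0}`. -/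
def galoisDual (p k : ℕ) [Fact p.Prime] {F : Type*} [Field F] [CharP F p] {n : ℕ}
    (C : Submodule F (Fin n → F)) : Submodule F (Fin n → F) where
  carrier := {x | ∀ c ∈ C, ∑ i, c i * x i ^ p ^ k = 0}
  zero_mem' := fun c _ => by
    simp [zero_pow (pow_pos (Nat.Prime.pos (Fact.out : p.Prime)) k).ne']
  add_mem' := by
    intro x y hx hy c hc
    have hpow : ∀ i : Fin n, (x + y) i ^ p ^ k = x i ^ p ^ k + y i ^ p ^ k := fun i => by
      simpa using add_pow_char_pow (x i) (y i) p k
    calc ∑ i, c i * (x + y) i ^ p ^ k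
        = ∑ i, (c i * x i ^ p ^ k + c i * y i ^ p ^ k) := by
          refine Finset.sum_congr rfl fun i _ => by rw [hpow i, mul_add]
      _ = 0 := by
          rw [Finset.sum_add_distrib, hx c hc, hy c hc, add_zero]
  smul_mem' := by
    intro a x hx c hc
    calc ∑ i, c i * (a • x) i ^ p ^ k
        = a ^ p ^ k * ∑ i, c i * x i ^ p ^ k := by
          rw [Finset.mul_sum]
          refine Finset.sum_congr rfl fun i _ => by
            simp only [Pi.smul_apply, smul_eq_mul, mul_pow]; ring
      _ = 0 := by rw [hx c hc, mul_zero]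

/-- A linear code `C` is a `k`-Galois LCD code if `C ∩ C^{⊥_k} = {0}`. -/
def IsGaloisLCD (p k : ℕ) [Fact p.Prime] {F : Type*} [Field F] [CharP F p] {n : ℕ}
    (C : Submodule F (Fin n → F)) : Prop :=
  C ⊓ galoisDual p k C = ⊥

/-- `C` has minimum Hamming distance `d`. -/
def IsMinDist {F : Type*} [Field F] [DecidableEq F] {n : ℕ}
    (C : Submodule F (Fin n → F)) (d : ℕ) : Prop :=
  (∃ x ∈ C, x ≠ 0 ∧ hammingNorm x = d) ∧ ∀ x ∈ C, x ≠ 0 → d ≤ hammingNorm x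

/-- `C` is an MDS code: the trivial code `{0}` counts as MDS, otherwise
the minimum distance is `n - dim C + 1`. -/
def IsMDS {F : Type*} [Field F] [DecidableEq F] {n : ℕ} (C : Submodule F (Fin n → F)) : Prop :=
  C = ⊥ ∨ IsMinDist C (n - Module.finrank F C + 1)

/-- `C` is `λ`-constacyclic: `(λ c_n, c_1, …, c_{n-1}) ∈ C` whenever `(c_1, …, c_n) ∈ C`. -/
def IsConstacyclic {F : Type*} [Field F] {n : ℕ} (lam : F) (C : Submodule F (Fin n → F)) : Prop :=
  ∀ c ∈ C, (fun i : Fin n => if (i : ℕ) = 0 then lam * c ⟨n - 1, by have := i.isLt; omega⟩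
    else c ⟨(i : ℕ) - 1, by have := i.isLt; omega⟩) ∈ C

/-- The Euclidean dual of a linear code. -/
def euclideanDual {F : Type*} [Field F] {n : ℕ}
    (C : Submodule F (Fin n → F)) : Submodule F (Fin n → F) where
  carrier := {x | ∀ c ∈ C, ∑ i, c i * x i = 0}
  zero_mem' := fun c _ => by simp
  add_mem' := by
    intro x y hx hy c hc
    calc ∑ i, c i * (x + y) i = ∑ i, (c i * x i + c i * y i) := by
          refine Finset.sum_congr rfl fun i _ => by simp [mul_add]
      _ = 0 := by rw [Finset.sum_add_distrib, hx c hc, hy c hc, add_zero]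
  smul_mem' := by
    intro a x hx c hc
    calc ∑ i, c i * (a • x) i = a * ∑ i, c i * x i := by
          rw [Finset.mul_sum]
          refine Finset.sum_congr rfl fun i _ => by
            simp only [Pi.smul_apply, smul_eq_mul]; ring
      _ = 0 := by rw [hx c hc, mul_zero]

/-- The coordinatewise `p^m`-power map `x ↦ (x_i^{p^m})_i`, as a semilinear map
with respect to the iterated Frobenius. -/
def frobPowMap (p m : ℕ) [Fact p.Prime] (F : Type*) [Field F] [CharP F p] (n : ℕ) :
    (Fin n → F) →ₛₗ[iterateFrobenius F p m] (Fin n → F) where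
  toFun x := fun i => x i ^ p ^ m
  map_add' x y := funext fun i => by simpa using add_pow_char_pow (x i) (y i) p m
  map_smul' a x := funext fun i => by
    simp [iterateFrobenius_def, mul_pow]


open Finset in
private lemma geom_sum_fin {F : Type*} [Field F] {w : F} {n : ℕ} (hw : w ^ n = 1) (h1 : w ≠ 1) :
    ∑ i : Fin n, w ^ (i : ℕ) = 0 := by
  rw [Fin.sum_univ_eq_sum_range (fun i => w ^ i)]
  have h := geom_sum_mul w n
  rw [hw, sub_self] at h
  rcases mul_eq_zero.mp h with h' | h'
  · exact h'
  · exact absurd (sub_eq_zero.mp h') h1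

private lemma zpow_mul_zpow {F : Type*} [Field F] {z : F} (hz0 : z ≠ 0) (a b : ℤ) :
    z ^ a * z ^ b = z ^ (a + b) := (zpow_add₀ hz0 a b).symm

private lemma zpow_pow' {F : Type*} [Field F] (z : F) (a : ℤ) (i : ℕ) :
    (z ^ a) ^ i = z ^ (a * i) := by
  rw [← zpow_natCast (z ^ a) i, ← zpow_mul]

/-- the root `z ^ (2t+1-m)`. -/
private def Wr {F : Type*} [Field F] (z : F) (m t : ℕ) : F := z ^ (2 * (t : ℤ) + 1 - (m : ℤ))

private lemma Wr_def {F : Type*} [Field F] (z : F) (m t : ℕ) :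
    Wr z m t = z ^ (2 * (t : ℤ) + 1 - (m : ℤ)) := rfl

private lemma Wr_pow {F : Type*} [Field F] (z : F) (m t i : ℕ) :
    Wr z m t ^ i = z ^ ((2 * (t : ℤ) + 1 - (m : ℤ)) * i) := zpow_pow' z _ i

private lemma Wr_ne_zero {F : Type*} [Field F] {z : F} (hz0 : z ≠ 0) (m t : ℕ) :
    Wr z m t ≠ 0 := zpow_ne_zero _ hz0

/-- parity-check map for the defining set `B`. -/
private def chk (F : Type*) [Field F] (n m : ℕ) (B : Fin m → F) :
    (Fin n → F) →ₗ[F] (Fin m → F) where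
  toFun x := fun j => ∑ i, x i * B j ^ (i : ℕ)
  map_add' x y := by
    funext j
    simp [add_mul, Finset.sum_add_distrib]
  map_smul' a x := by
    funext j
    simp [Finset.mul_sum, mul_assoc]

private lemma mem_chk_ker {F : Type*} [Field F] {n m : ℕ} {B : Fin m → F} {x : Fin n → F} :
    x ∈ LinearMap.ker (chk F n m B) ↔ ∀ j : Fin m, ∑ i : Fin n, x i * B j ^ (i : ℕ) = 0 := by
  simp [chk, LinearMap.mem_ker, funext_iff]

open Finset in
private lemma consta_step {F : Type*} [Field F] {n : ℕ} (c : Fin (n + 1) → F) (β : F)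
    (hβ : β ^ (n + 1) = -1)
    (h : ∑ i : Fin (n + 1), c i * β ^ (i : ℕ) = 0)
    (c' : Fin (n + 1) → F)
    (hc' : ∀ i : Fin (n + 1), c' i = if (i : ℕ) = 0 then (-1 : F) * c ⟨n, n.lt_succ_self⟩
      else c ⟨(i : ℕ) - 1, by have := i.isLt; omega⟩) :
    ∑ i : Fin (n + 1), c' i * β ^ (i : ℕ) = 0 := by
  classical
  set f : ℕ → F := fun i => (if h : i < n + 1 then c' ⟨i, h⟩ else 0) * β ^ i with hf
  set g : ℕ → F := fun i => (if h : i < n + 1 then c ⟨i, h⟩ else 0) * β ^ i with hg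
  have hsum : ∑ i : Fin (n + 1), c' i * β ^ (i : ℕ) = ∑ i ∈ range (n + 1), f i := by
    rw [← Fin.sum_univ_eq_sum_range f]
    refine Finset.sum_congr rfl fun i _ => ?_
    simp [hf, i.isLt]
    intro hlt; have := i.isLt; omega
  have hsumg : ∑ i ∈ range (n + 1), g i = 0 := by
    rw [← Fin.sum_univ_eq_sum_range g, ← h]
    refine Finset.sum_congr rfl fun i _ => ?_
    simp [hg, i.isLt]
    intro hlt; have := i.isLt; omega
  have hgn : ∑ i ∈ range n, g i = -(c ⟨n, n.lt_succ_self⟩ * β ^ n) := by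
    have h1 : ∑ i ∈ range n, g i + g n = 0 := by
      rw [← Finset.sum_range_succ]; exact hsumg
    have hgnn : g n = c ⟨n, n.lt_succ_self⟩ * β ^ n := by simp [hg]
    rw [hgnn] at h1
    linear_combination h1
  rw [hsum, Finset.sum_range_succ' f n]
  have hf0 : f 0 = (-1 : F) * c ⟨n, n.lt_succ_self⟩ := by
    simp [hf, hc' 0]
  have hfs : ∀ i ∈ range n, f (i + 1) = g i * β := by
    intro i hi
    rw [Finset.mem_range] at hi
    have h1 : i + 1 < n + 1 := by omega
    rw [hf, hg]
    simp only [dif_pos h1, dif_pos (by omega : i < n + 1)]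
    rw [hc' ⟨i + 1, h1⟩]
    simp only [Fin.val_mk]
    rw [if_neg (by omega)]
    have : (⟨i + 1 - 1, by omega⟩ : Fin (n + 1)) = ⟨i, by omega⟩ := by
      ext; simp
    rw [this, pow_succ]
    ring
  rw [Finset.sum_congr rfl hfs, ← Finset.sum_mul, hgn, hf0]
  have : β ^ n * β = β ^ (n + 1) := (pow_succ β n).symm
  calc -(c ⟨n, n.lt_succ_self⟩ * β ^ n) * β + (-1 : F) * c ⟨n, n.lt_succ_self⟩
      = -(c ⟨n, n.lt_succ_self⟩ * β ^ (n + 1)) - c ⟨n, n.lt_succ_self⟩ := by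
        rw [← this]; ring
    _ = 0 := by rw [hβ]; ring

open Finset in
private theorem negacyclic_construction
    (p : ℕ) [hpp : Fact p.Prime] (F : Type*) [Field F] [DecidableEq F] [CharP F p]
    (n m : ℕ) (hm0 : 0 < m) (hm2 : 2 ∣ m) (hmn : m + 1 ≤ n)
    (hnF : (n : F) ≠ 0)
    (z : F) (hz0 : z ≠ 0) (hzn : z ^ n = -1)
    (hzd : ∀ k : ℤ, z ^ k = 1 → (2 * (n : ℤ)) ∣ k)
    (hzp : z ^ p = z) :
    ∃ C : Submodule F (Fin n → F),
      IsConstacyclic (-1 : F) C ∧ IsGaloisLCD p 1 C ∧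
      Module.finrank F C = n - m ∧ IsMinDist C (m + 1) := by
  have hn0 : 0 < n := by omega
  have hz2n : z ^ (2 * (n : ℤ)) = 1 := by
    rw [show 2 * (n : ℤ) = (n : ℤ) * 2 by ring, zpow_mul, zpow_natCast, hzn]
    norm_num
  have hzone : ∀ k : ℤ, z ^ (2 * (n : ℤ) * k) = 1 := by
    intro k; rw [zpow_mul, hz2n, one_zpow]
  have hneg : ∀ s : ℤ, (-1 : F) ^ (2 * s + 1) = -1 := by
    intro s
    rw [zpow_add₀ (by norm_num : (-1 : F) ≠ 0), zpow_mul, zpow_one]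
    norm_num
  obtain ⟨m2, hm2'⟩ := hm2
  have hWn : ∀ t : ℕ, Wr z m t ^ n = -1 := by
    intro t
    rw [Wr_pow,
      show (2 * (t : ℤ) + 1 - (m : ℤ)) * (n : ℕ) = (n : ℤ) * (2 * ((t : ℤ) - m2) + 1) by
        subst hm2'; push_cast; ring,
      zpow_mul, zpow_natCast, hzn, hneg]
  -- master geometric sum
  have hgeo : ∀ k : ℤ, ∑ t : Fin n, (z ^ (2 * k)) ^ (t : ℕ) = if (n : ℤ) ∣ k then (n : F) else 0 := by
    intro k
    by_cases h : (n : ℤ) ∣ k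
    · obtain ⟨c, rfl⟩ := h
      rw [if_pos ⟨c, rfl⟩, show 2 * ((n : ℤ) * c) = 2 * (n : ℤ) * c by ring, hzone]
      simp
    · rw [if_neg h]
      refine geom_sum_fin ?_ ?_
      · rw [← zpow_natCast (z ^ (2 * k)) n, ← zpow_mul,
          show 2 * k * ((n : ℕ) : ℤ) = 2 * (n : ℤ) * k by ring, hzone]
      · intro h1
        obtain ⟨c, hc⟩ := hzd _ h1
        exact h ⟨c, mul_left_cancel₀ (by norm_num : (2:ℤ) ≠ 0) (by linear_combination hc)⟩
  have hsum1 : ∀ s t : ℕ, ∑ i : Fin n, (Wr z m s * Wr z m t) ^ (i : ℕ)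
      = if (n : ℤ) ∣ ((s : ℤ) + t + 1 - m) then (n : F) else 0 := by
    intro s t
    have h1 : Wr z m s * Wr z m t = z ^ (2 * ((s : ℤ) + t + 1 - m)) := by
      rw [Wr_def, Wr_def, zpow_mul_zpow hz0]
      congr 1; ring
    rw [h1, hgeo]
  have hsum2 : ∀ i j : Fin n, ∑ t : Fin n,
      Wr z m (n + m - 1 - (t : ℕ)) ^ (i : ℕ) * Wr z m (t : ℕ) ^ (j : ℕ)
      = if j = i then (n : F) else 0 := by
    intro i j
    have hterm : ∀ t : Fin n,
        Wr z m (n + m - 1 - (t : ℕ)) ^ (i : ℕ) * Wr z m (t : ℕ) ^ (j : ℕ)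
        = z ^ ((2 * (n : ℤ) + m - 1) * i + (1 - (m : ℤ)) * j) * (z ^ (2 * ((j : ℤ) - i))) ^ (t : ℕ) := by
      intro t
      have hc : ((n + m - 1 - (t : ℕ) : ℕ) : ℤ) = (n : ℤ) + m - 1 - (t : ℕ) := by
        have := t.isLt; omega
      rw [Wr_pow, Wr_pow, zpow_mul_zpow hz0, zpow_pow', zpow_mul_zpow hz0]
      congr 1
      rw [hc]; ring
    rw [Finset.sum_congr rfl fun t _ => hterm t, ← Finset.mul_sum, hgeo ((j : ℤ) - i)]
    by_cases h : j = i
    · subst h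
      rw [if_pos (by simp), if_pos rfl,
        show (2 * (n : ℤ) + m - 1) * j + (1 - (m : ℤ)) * j = 2 * (n : ℤ) * j by ring, hzone, one_mul]
    · rw [if_neg ?_, if_neg h, mul_zero]
      intro hdvd
      have h0 := Int.eq_zero_of_abs_lt_dvd hdvd
        (by have := i.isLt; have := j.isLt; rw [abs_sub_lt_iff]; omega)
      exact h (Fin.ext (by omega))
  -- the code
  set C : Submodule F (Fin n → F) := LinearMap.ker (chk F n m fun j => Wr z m (j : ℕ)) with hC
  have hmemC : ∀ x : Fin n → F,
      x ∈ C ↔ ∀ j : Fin m, ∑ i : Fin n, x i * Wr z m (j : ℕ) ^ (i : ℕ) = 0 := by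
    intro x; rw [hC]; exact mem_chk_ker
  -- weight bound
  have hwt : ∀ x : Fin n → F,
      (∀ j : Fin m, ∑ i : Fin n, x i * Wr z m (j : ℕ) ^ (i : ℕ) = 0) →
      ({i | x i ≠ 0} : Finset (Fin n)).card ≤ m → x = 0 := by
    intro x hx hcard
    set s : Finset (Fin n) := {i | x i ≠ 0} with hs
    set idx : Fin s.card → Fin n := fun t => ((s.equivFin.symm t : ↥s) : Fin n) with hidxdef
    have hinj : Function.Injective idx := by
      intro a b hab
      exact s.equivFin.symm.injective (Subtype.coe_injective hab)
    set v : Fin s.card → F := fun t => z ^ (2 * ((idx t : ℕ) : ℤ)) with hv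
    set dg : Fin s.card → F := fun t => z ^ ((1 - (m : ℤ)) * ((idx t : ℕ) : ℤ)) with hdg
    have hvinj : Function.Injective v := by
      intro a b hab
      have h1 : z ^ (2 * ((idx a : ℕ) : ℤ) - 2 * ((idx b : ℕ) : ℤ)) = 1 := by
        rw [zpow_sub₀ hz0]
        rw [hv] at hab
        simp only at hab
        rw [hab, div_self (zpow_ne_zero _ hz0)]
      obtain ⟨c, hc⟩ := hzd _ h1
      have hdvd : (n : ℤ) ∣ ((idx a : ℕ) : ℤ) - ((idx b : ℕ) : ℤ) := ⟨c, mul_left_cancel₀ (by norm_num : (2:ℤ) ≠ 0) (by linear_combination hc)⟩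
      have hA := (idx a).isLt; have hB := (idx b).isLt
      have h0 := Int.eq_zero_of_abs_lt_dvd hdvd (by rw [abs_sub_lt_iff]; omega)
      exact hinj (Fin.ext (by omega))
    set N : Matrix (Fin s.card) (Fin s.card) F :=
      Matrix.of (fun j t : Fin s.card => v t ^ (j : ℕ) * dg t) with hN
    have hNdet : N.det ≠ 0 := by
      have hNe : N = (Matrix.vandermonde v).transpose * Matrix.diagonal dg := by
        ext j t
        simp [hN, Matrix.mul_diagonal, Matrix.vandermonde]
      rw [hNe, Matrix.det_mul, Matrix.det_transpose, Matrix.det_vandermonde, Matrix.det_diagonal]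
      apply mul_ne_zero
      · refine Finset.prod_ne_zero_iff.mpr fun i _ => Finset.prod_ne_zero_iff.mpr fun j hj => ?_
        exact sub_ne_zero.mpr fun hh => (Finset.mem_Ioi.mp hj).ne' (hvinj hh)
      · exact Finset.prod_ne_zero_iff.mpr fun t _ => zpow_ne_zero _ hz0
    have hmul : N.mulVec (fun t => x (idx t)) = 0 := by
      funext j
      have hjm : (j : ℕ) < m := lt_of_lt_of_le j.isLt hcard
      have hNjt : ∀ t, N j t = Wr z m (j : ℕ) ^ ((idx t : ℕ)) := by
        intro t
        show v t ^ (j : ℕ) * dg t = _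
        rw [hv, hdg]
        simp only
        rw [Wr_pow, zpow_pow', zpow_mul_zpow hz0]
        congr 1; ring
      have step1 : N.mulVec (fun t => x (idx t)) j
          = ∑ t, x (idx t) * Wr z m (j : ℕ) ^ ((idx t : ℕ)) := by
        rw [Matrix.mulVec, dotProduct]
        exact Finset.sum_congr rfl fun t _ => by rw [hNjt t]; ring
      have step2 : ∑ t, x (idx t) * Wr z m (j : ℕ) ^ ((idx t : ℕ))
          = ∑ i ∈ s, x i * Wr z m (j : ℕ) ^ ((i : ℕ)) := by
        have e1 := Equiv.sum_comp s.equivFin.symm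
          (fun a : ↥s => x (a : Fin n) * Wr z m (j : ℕ) ^ (((a : Fin n) : ℕ)))
        have e2 := Finset.sum_coe_sort s (fun i => x i * Wr z m (j : ℕ) ^ ((i : ℕ)))
        exact e1.trans e2
      have step3 : ∑ i ∈ s, x i * Wr z m (j : ℕ) ^ ((i : ℕ))
          = ∑ i : Fin n, x i * Wr z m (j : ℕ) ^ ((i : ℕ)) := by
        exact Finset.sum_filter_of_ne fun i _ hne => by
          intro hxi
          exact hne (by rw [hxi, zero_mul])
      rw [step1, step2, step3, hx ⟨(j : ℕ), hjm⟩]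
      rfl
    have hzero := Matrix.eq_zero_of_mulVec_eq_zero hNdet hmul
    funext i
    by_cases hxi : x i = 0
    · exact hxi
    · exfalso
      have him : i ∈ s := by rw [hs]; simp [hxi]
      have hidxi : idx (s.equivFin ⟨i, him⟩) = i := by
        rw [hidxdef]; simp
      have := congrFun hzero (s.equivFin ⟨i, him⟩)
      simp only [Pi.zero_apply] at this
      rw [hidxi] at this
      exact hxi this
  -- all roots vanish implies zero
  have hallroots : ∀ y : Fin n → F,
      (∀ t : Fin n, ∑ j : Fin n, y j * Wr z m (t : ℕ) ^ (j : ℕ) = 0) → y = 0 := by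
    intro y hy
    funext i
    have h0 : ∑ t : Fin n, Wr z m (n + m - 1 - (t : ℕ)) ^ ((i : ℕ)) *
        ∑ j : Fin n, y j * Wr z m (t : ℕ) ^ (j : ℕ) = 0 :=
      Finset.sum_eq_zero fun t _ => by rw [hy t, mul_zero]
    have h1 : ∑ t : Fin n, Wr z m (n + m - 1 - (t : ℕ)) ^ ((i : ℕ)) *
        ∑ j : Fin n, y j * Wr z m (t : ℕ) ^ (j : ℕ)
        = ∑ j : Fin n, y j * ∑ t : Fin n,
            Wr z m (n + m - 1 - (t : ℕ)) ^ ((i : ℕ)) * Wr z m (t : ℕ) ^ (j : ℕ) := by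
      simp only [Finset.mul_sum]
      rw [Finset.sum_comm]
      exact Finset.sum_congr rfl fun j _ => Finset.sum_congr rfl fun t _ => by ring
    rw [h1] at h0
    rw [Finset.sum_congr rfl (fun j _ => by rw [hsum2 i j, mul_ite, mul_zero])] at h0
    rw [Finset.sum_ite_eq' Finset.univ i (fun j => y j * (n : F))] at h0
    simp only [Finset.mem_univ, if_true] at h0
    have := mul_eq_zero.mp h0
    rcases this with h | h
    · simpa using h
    · exact absurd h hnF
  refine ⟨C, ?_, ?_, ?_, ?_⟩
  · -- IsConstacyclic
    intro c hc
    rw [hmemC] at hc ⊢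
    intro j
    obtain ⟨k, rfl⟩ : ∃ k, n = k + 1 := ⟨n - 1, by omega⟩
    refine consta_step c (Wr z m (j : ℕ)) (hWn (j : ℕ)) (hc j) _ ?_
    intro i
    by_cases hi : (i : ℕ) = 0
    · simp [hi]
    · simp [hi]
  · -- IsGaloisLCD
    show C ⊓ galoisDual p 1 C = ⊥
    rw [Submodule.eq_bot_iff]
    intro x hx
    have hxC : x ∈ C := (Submodule.mem_inf.mp hx).1
    have hd : ∀ c ∈ C, ∑ i, c i * x i ^ p ^ 1 = 0 := (Submodule.mem_inf.mp hx).2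
    have hzp1 : z ^ (p - 1) = 1 := by
      have hp1 : 1 ≤ p := hpp.out.one_le
      have h2 : z ^ (p - 1) * z = z := by
        rw [← pow_succ, show p - 1 + 1 = p by omega, hzp]
      exact mul_right_cancel₀ hz0 (by rw [h2, one_mul])
    have hz1 : z ^ ((p : ℤ) - 1) = 1 := by
      rw [show (p : ℤ) - 1 = ((p - 1 : ℕ) : ℤ) by have := hpp.out.one_le; omega,
        zpow_natCast, hzp1]
    have hWp : ∀ t : ℕ, Wr z m t ^ p = Wr z m t := by
      intro t
      rw [Wr_pow]
      calc z ^ ((2 * (t : ℤ) + 1 - m) * p)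
          = z ^ ((2 * (t : ℤ) + 1 - m) + ((p : ℤ) - 1) * (2 * (t : ℤ) + 1 - m)) := by
            congr 1; ring
        _ = z ^ (2 * (t : ℤ) + 1 - m) * (z ^ ((p : ℤ) - 1)) ^ (2 * (t : ℤ) + 1 - m) := by
            rw [← zpow_mul, zpow_add₀ hz0]
        _ = Wr z m t := by rw [hz1, one_zpow, mul_one, Wr_def]
    have hyroots : ∀ t : Fin n, ∑ j : Fin n, (x j ^ p) * Wr z m (t : ℕ) ^ (j : ℕ) = 0 := by
      intro t
      by_cases htm : (t : ℕ) < m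
      · have h0 := (hmemC x).mp hxC ⟨(t : ℕ), htm⟩
        have h2 := map_sum (frobenius F p) (fun i : Fin n => x i * Wr z m (t : ℕ) ^ (i : ℕ)) Finset.univ
        simp only [frobenius_def] at h2
        calc ∑ j : Fin n, x j ^ p * Wr z m (t : ℕ) ^ (j : ℕ)
            = ∑ j : Fin n, (x j * Wr z m (t : ℕ) ^ (j : ℕ)) ^ p := by
              refine Finset.sum_congr rfl fun j _ => ?_
              rw [mul_pow, ← pow_right_comm, hWp]
          _ = 0 := by rw [← h2, h0, zero_pow hpp.out.ne_zero]
      · have hcm : (fun i : Fin n => Wr z m (t : ℕ) ^ (i : ℕ)) ∈ C := by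
          rw [hmemC]
          intro j
          have h1 := hsum1 (t : ℕ) (j : ℕ)
          rw [if_neg ?_] at h1
          · calc ∑ i : Fin n, Wr z m (t : ℕ) ^ (i : ℕ) * Wr z m (j : ℕ) ^ (i : ℕ)
                = ∑ i : Fin n, (Wr z m (t : ℕ) * Wr z m (j : ℕ)) ^ (i : ℕ) := by
                  simp only [mul_pow]
              _ = 0 := h1
          · intro hdvd
            have hj := j.isLt; have ht := t.isLt
            have hpos : 0 < (t : ℤ) + j + 1 - m := by omega
            have := Int.le_of_dvd hpos hdvd
            omega
        have h2 := hd _ hcm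
        simp only [pow_one] at h2
        calc ∑ j : Fin n, x j ^ p * Wr z m (t : ℕ) ^ (j : ℕ)
            = ∑ j : Fin n, Wr z m (t : ℕ) ^ (j : ℕ) * x j ^ p :=
              Finset.sum_congr rfl fun j _ => mul_comm _ _
          _ = 0 := h2
    have hy0 := hallroots (fun j => x j ^ p) hyroots
    funext i
    have := congrFun hy0 i
    simp only [Pi.zero_apply] at this
    exact (pow_eq_zero_iff hpp.out.ne_zero).mp this
  · -- finrank
    have hsurj : Function.Surjective (chk F n m fun j => Wr z m (j : ℕ)) := by
      intro d
      refine ⟨fun i => (n : F)⁻¹ * ∑ j : Fin m, d j * Wr z m (m - 1 - (j : ℕ)) ^ (i : ℕ), ?_⟩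
      funext k
      show ∑ i : Fin n, ((n : F)⁻¹ * ∑ j : Fin m, d j * Wr z m (m - 1 - (j : ℕ)) ^ (i : ℕ)) *
          Wr z m (k : ℕ) ^ (i : ℕ) = d k
      calc ∑ i : Fin n, ((n : F)⁻¹ * ∑ j : Fin m, d j * Wr z m (m - 1 - (j : ℕ)) ^ (i : ℕ)) *
              Wr z m (k : ℕ) ^ (i : ℕ)
          = (n : F)⁻¹ * ∑ j : Fin m, d j *
              ∑ i : Fin n, (Wr z m (m - 1 - (j : ℕ)) * Wr z m (k : ℕ)) ^ (i : ℕ) := by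
            simp only [Finset.mul_sum, Finset.sum_mul, mul_pow]
            rw [Finset.sum_comm]
            exact Finset.sum_congr rfl fun j _ => Finset.sum_congr rfl fun i _ => by ring
        _ = (n : F)⁻¹ * ∑ j : Fin m, d j * (if j = k then (n : F) else 0) := by
            refine congrArg _ (Finset.sum_congr rfl fun j _ => ?_)
            rw [hsum1 (m - 1 - (j : ℕ)) (k : ℕ)]
            have hcast : ((m - 1 - (j : ℕ) : ℕ) : ℤ) + (k : ℕ) + 1 - m = ((k : ℕ) : ℤ) - (j : ℕ) := by
              have := j.isLt; omega
            rw [hcast]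
            by_cases h : j = k
            · subst h; simp
            · rw [if_neg h, if_neg ?_]
              intro hdvd
              have h0 := Int.eq_zero_of_abs_lt_dvd hdvd
                (by have := j.isLt; have := k.isLt; rw [abs_sub_lt_iff]; omega)
              exact h (Fin.ext (by omega))
        _ = d k := by
            rw [Finset.sum_congr rfl (fun j _ => by rw [mul_ite, mul_zero]),
              Finset.sum_ite_eq' Finset.univ k (fun j => d j * (n : F))]
            simp only [Finset.mem_univ, if_true]
            field_simp
    have h1 := LinearMap.finrank_range_add_finrank_ker (chk F n m fun j => Wr z m (j : ℕ))
    rw [LinearMap.range_eq_top.mpr hsurj, finrank_top, Module.finrank_pi, Module.finrank_pi] at h1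
    simp only [Fintype.card_fin] at h1
    rw [hC]
    omega
  · -- IsMinDist
    have hlb : ∀ x ∈ C, x ≠ 0 → m + 1 ≤ hammingNorm x := by
      intro x hxC hx0
      by_contra hlt
      push_neg at hlt
      refine hx0 (hwt x ((hmemC x).mp hxC) ?_)
      have : hammingNorm x = ({i | x i ≠ 0} : Finset (Fin n)).card := rfl
      omega
    set g : Polynomial F := ∏ j : Fin m, (Polynomial.X - Polynomial.C (Wr z m (j : ℕ))) with hg
    have hmonic : g.Monic := Polynomial.monic_prod_of_monic _ _ fun j _ => Polynomial.monic_X_sub_C _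
    have hdeg : g.natDegree = m := by
      rw [hg, Polynomial.natDegree_prod _ _ fun j _ => Polynomial.X_sub_C_ne_zero _]
      simp [Polynomial.natDegree_X_sub_C]
    have hcC : (fun i : Fin n => g.coeff (i : ℕ)) ∈ C := by
      rw [hmemC]
      intro j
      have hev : g.eval (Wr z m (j : ℕ)) = 0 := by
        rw [hg, Polynomial.eval_prod]
        exact Finset.prod_eq_zero (Finset.mem_univ j) (by simp)
      have heq := Polynomial.eval_eq_sum_range' (n := n) (by omega) (Wr z m (j : ℕ)) (p := g)
      rw [hev] at heq
      rw [← Fin.sum_univ_eq_sum_range (fun i => g.coeff i * Wr z m (j : ℕ) ^ i)] at heq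
      exact heq.symm
    have hcne : (fun i : Fin n => g.coeff (i : ℕ)) ≠ 0 := by
      intro h0
      have h1 : g.coeff m = 1 := by rw [← hdeg]; exact hmonic.coeff_natDegree
      have h2 := congrFun h0 ⟨m, by omega⟩
      have h2' : g.coeff m = (0 : F) := h2
      rw [h1] at h2'
      exact one_ne_zero h2'
    have hub : hammingNorm (fun i : Fin n => g.coeff (i : ℕ)) ≤ m + 1 := by
      have hrw : hammingNorm (fun i : Fin n => g.coeff (i : ℕ))
          = ({i | g.coeff (i : ℕ) ≠ 0} : Finset (Fin n)).card := rfl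
      rw [hrw]
      calc ({i | g.coeff (i : ℕ) ≠ 0} : Finset (Fin n)).card
          ≤ (Finset.univ : Finset (Fin (m + 1))).card := by
            refine Finset.card_le_card_of_injOn
              (fun i => (⟨min (i : ℕ) m, by omega⟩ : Fin (m + 1)))
              (fun a _ => Finset.mem_univ _) ?_
            intro a ha b hb hab
            simp only [Finset.mem_coe, Finset.mem_filter, Finset.mem_univ, true_and] at ha hb
            have ha2 : (a : ℕ) ≤ m := by
              rw [← hdeg]
              exact Polynomial.le_natDegree_of_ne_zero (by simpa using ha)
            have hb2 : (b : ℕ) ≤ m := by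
              rw [← hdeg]
              exact Polynomial.le_natDegree_of_ne_zero (by simpa using hb)
            rw [Fin.mk.injEq] at hab
            exact Fin.ext (by omega)
        _ = m + 1 := by simp
    exact ⟨⟨fun i : Fin n => g.coeff (i : ℕ), hcC, hcne,
      le_antisymm hub (hlb _ hcC hcne)⟩, hlb⟩

/-- Let `q = p^e` with `e ≥ 2` and `p ≡ 1 (mod 4)` a prime, and take `k = 1`.  For every
`1 ≤ l ≤ (p-5)/4` there exists a negacyclic code over `F_q` that is a `1`-Galois LCD MDS
code of length `(p-1)/2`, dimension `(p-1)/2 - 2l` and minimum distance `2l + 1`. -/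
theorem exists_negacyclic_galoisLCD_MDS_one_mod_four
    (p e : ℕ) [Fact p.Prime] (he : 2 ≤ e) (hp : p % 4 = 1)
    (F : Type*) [Field F] [Fintype F] [DecidableEq F] [CharP F p]
    (hF : Fintype.card F = p ^ e)
    {l : ℕ} (hl1 : 1 ≤ l) (hl2 : l ≤ (p - 5) / 4) :
    ∃ C : Submodule F (Fin ((p - 1) / 2) → F),
      IsConstacyclic (-1 : F) C ∧ IsGaloisLCD p 1 C ∧
      Module.finrank F C = (p - 1) / 2 - 2 * l ∧ IsMinDist C (2 * l + 1) := by
  have hpp : p.Prime := Fact.out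
  have hp2 : 2 ≤ p := hpp.two_le
  have h4l : 4 * l ≤ p - 5 := by
    have h1 : 1 ≤ (p - 5) / 4 := le_trans hl1 hl2
    have h2 := Nat.div_mul_le_self (p - 5) 4
    have h3 := Nat.mul_le_mul_left 4 hl2
    omega
  have hp9 : 9 ≤ p := by
    have h1 : 1 ≤ (p - 5) / 4 := le_trans hl1 hl2
    omega
  obtain ⟨g, hg⟩ := IsCyclic.exists_ofOrder_eq_natCard (α := Fˣ)
  have hcard : Nat.card Fˣ = p ^ e - 1 := by
    rw [Nat.card_units, Nat.card_eq_fintype_card, hF]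
  have hdvd : p - 1 ∣ p ^ e - 1 := by simpa using Nat.sub_dvd_pow_sub_pow p 1 e
  set u : Fˣ := g ^ ((p ^ e - 1) / (p - 1)) with hudef
  have hu : orderOf u = p - 1 := by
    rw [hudef, orderOf_pow, hg, hcard, Nat.gcd_eq_right (Nat.div_dvd_of_dvd hdvd),
      Nat.div_div_self hdvd]
    have : 1 < p ^ e := Nat.one_lt_pow (by omega) hpp.one_lt
    omega
  set z : F := (u : F) with hzdef
  have hz0 : z ≠ 0 := Units.ne_zero u
  have hupk : ∀ k : ℤ, z ^ k = ((u ^ k : Fˣ) : F) := fun k =>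
    (Units.val_zpow_eq_zpow_val u k).symm
  have hzdd : ∀ k : ℤ, z ^ k = 1 → (2 * (((p - 1) / 2 : ℕ) : ℤ)) ∣ k := by
    intro k hk
    have h1 : ((u ^ k : Fˣ) : F) = 1 := (hupk k).symm.trans hk
    have h2 : u ^ k = 1 := Units.val_eq_one.mp h1
    have h3 : (orderOf u : ℤ) ∣ k := orderOf_dvd_iff_zpow_eq_one.mpr h2
    rw [hu] at h3
    have h4 : (2 * (((p - 1) / 2 : ℕ) : ℤ)) = ((p - 1 : ℕ) : ℤ) := by omega
    rw [h4]; exact h3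
  have hzp1 : z ^ (p - 1) = 1 := by
    have h1 : u ^ (p - 1) = 1 := by rw [← hu]; exact pow_orderOf_eq_one u
    rw [hzdef, ← Units.val_pow_eq_pow_val, h1, Units.val_one]
  have hzn : z ^ ((p - 1) / 2) = -1 := by
    have hsq : (z ^ ((p - 1) / 2) - 1) * (z ^ ((p - 1) / 2) + 1) = 0 := by
      have h1 : z ^ ((p - 1) / 2) * z ^ ((p - 1) / 2) = 1 := by
        rw [← pow_add, show (p - 1) / 2 + (p - 1) / 2 = p - 1 by omega, hzp1]
      linear_combination h1
    have hne1 : z ^ ((p - 1) / 2) ≠ 1 := by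
      intro h1
      have h2 : u ^ ((p - 1) / 2) = 1 := Units.ext (by
        rw [Units.val_pow_eq_pow_val, Units.val_one]
        exact h1)
      have h3 := orderOf_dvd_of_pow_eq_one h2
      rw [hu] at h3
      have := Nat.le_of_dvd (by omega) h3
      omega
    rcases mul_eq_zero.mp hsq with h | h
    · exact absurd (sub_eq_zero.mp h) hne1
    · exact eq_neg_of_add_eq_zero_left h
  have hzp : z ^ p = z := by
    rw [show p = (p - 1) + 1 by omega, pow_succ, hzp1, one_mul]
  have hnF : (((p - 1) / 2 : ℕ) : F) ≠ 0 := by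
    intro h
    have h1 := (CharP.cast_eq_zero_iff F p _).mp h
    have := Nat.le_of_dvd (by omega) h1
    omega
  obtain ⟨C, hc1, hc2, hc3, hc4⟩ := negacyclic_construction p F ((p - 1) / 2) (2 * l)
    (by omega) ⟨l, rfl⟩ (by omega) hnF z hz0 hzn hzdd hzp
  exact ⟨C, hc1, hc2, hc3, hc4⟩
end

section
/- Let q = p^e with e ≥ 2 and p a prime with p ≡ 3 (mod 4), and take k = 1. Then for every integer l with 1 ≤ l ≤ (p-3)/4 there exists a negacyclic code over F_q that is a 1-Galois LCD MDS code with length (p-1)/2, dimension (p-1)/2 - 2l + 1, and minimum Hamming distance 2l. -/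
open Finset

section AuxNegacyclic
open Matrix

lemma det_aux {F : Type*} [Field F] {n m : ℕ} (α : F) (hα0 : α ≠ 0)
    (hα2 : orderOf (α ^ 2) = n) (b : ℕ) (w : Fin m → ℕ)
    (hw : Function.Injective w) (hwn : ∀ j, w j < n) :
    (Matrix.of fun i j : Fin m => α ^ ((2 * (b + (i : ℕ)) + 1) * w j)).det ≠ 0 := by
  have hy : Function.Injective fun j : Fin m => (α ^ 2) ^ w j := by
    intro j j' h
    exact hw (pow_injOn_Iio_orderOf (by simpa [hα2] using hwn j)
      (by simpa [hα2] using hwn j') h)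
  have hM : (Matrix.of fun i j : Fin m => α ^ ((2 * (b + (i : ℕ)) + 1) * w j))
      = (Matrix.vandermonde fun j => (α ^ 2) ^ w j)ᵀ
        * Matrix.diagonal (fun j => α ^ ((2 * b + 1) * w j)) := by
    ext i j
    rw [Matrix.mul_diagonal, Matrix.transpose_apply, Matrix.vandermonde]
    simp only [Matrix.of_apply]
    rw [← pow_mul, ← pow_mul, ← pow_add]
    congr 1
    ring
  rw [hM, Matrix.det_mul, Matrix.det_transpose, Matrix.det_diagonal]
  refine mul_ne_zero (Matrix.det_vandermonde_ne_zero_iff.mpr hy) ?_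
  exact Finset.prod_ne_zero_iff.mpr fun j _ => pow_ne_zero _ hα0

lemma sum_extend {F : Type*} [Field F] {n m : ℕ} (hmn : m ≤ n) (g : ℕ → F) (u : Fin m → F) :
    ∑ j : Fin n, g (j : ℕ) * (if h : (j : ℕ) < m then u ⟨j, h⟩ else 0)
      = ∑ j : Fin m, g (j : ℕ) * u j := by
  rw [Fin.sum_univ_eq_sum_range (fun j => g j * (if h : j < m then u ⟨j, h⟩ else 0)) n]
  rw [show (∑ j : Fin m, g (j : ℕ) * u j) =
      ∑ j : Fin m, g (j:ℕ) * (if h : (j:ℕ) < m then u ⟨j, h⟩ else 0) from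
    Finset.sum_congr rfl fun j _ => by rw [dif_pos j.isLt]]
  rw [Fin.sum_univ_eq_sum_range (fun j => g j * (if h : j < m then u ⟨j, h⟩ else 0)) m]
  refine (Finset.sum_subset (Finset.range_subset_range.mpr hmn) fun j _ hj => ?_).symm
  rw [Finset.mem_range, not_lt] at hj
  rw [dif_neg (by omega), mul_zero]

lemma eq_zero_of_mulVec {F : Type*} [Field F] {m : ℕ} (M : Matrix (Fin m) (Fin m) F)
    (hdet : M.det ≠ 0) (x : Fin m → F) (h : M.mulVec x = 0) : x = 0 := by
  have h2 : (M⁻¹ * M).mulVec x = 0 := by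
    rw [← Matrix.mulVec_mulVec, h, Matrix.mulVec_zero]
  rwa [Matrix.nonsing_inv_mul _ (isUnit_iff_ne_zero.mpr hdet), Matrix.one_mulVec] at h2

lemma negacyclic_sum {F : Type*} [Field F] {N : ℕ} (g : F) (hgn : g ^ (N + 1) = -1)
    (c : Fin (N + 1) → F) (h0 : ∑ j : Fin (N + 1), g ^ (j : ℕ) * c j = 0) :
    ∑ j : Fin (N + 1), g ^ (j : ℕ) *
      (if (j : ℕ) = 0 then (-1 : F) * c ⟨N + 1 - 1, by omega⟩
        else c ⟨(j : ℕ) - 1, by have := j.isLt; omega⟩) = 0 := by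
  have hcast : ∑ j : Fin N, g ^ (j : ℕ) * c j.castSucc = -(g ^ N * c (Fin.last N)) := by
    rw [Fin.sum_univ_castSucc] at h0
    simp only [Fin.coe_castSucc, Fin.val_last] at h0
    linear_combination h0
  rw [Fin.sum_univ_succ]
  simp only [Fin.val_zero, Fin.val_succ, Nat.add_sub_cancel, pow_zero, one_mul,
    Nat.succ_ne_zero, if_false, if_true, reduceIte]
  have h2 : ∀ j : Fin N, g ^ ((j : ℕ) + 1) * c ⟨(j : ℕ), by have := j.isLt; omega⟩
      = g * (g ^ (j : ℕ) * c j.castSucc) := by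
    intro j
    have hcc : c ⟨(j : ℕ), by have := j.isLt; omega⟩ = c j.castSucc := rfl
    rw [hcc, pow_succ]
    ring
  rw [Finset.sum_congr rfl fun j _ => h2 j, ← Finset.mul_sum, hcast]
  have hNl : c ⟨N, by omega⟩ = c (Fin.last N) := rfl
  rw [hNl]
  rw [show g * -(g ^ N * c (Fin.last N)) = -(g ^ (N + 1) * c (Fin.last N)) by
    rw [pow_succ]; ring, hgn]
  ring

lemma master {F : Type*} [Field F] [Fintype F] [DecidableEq F] (p : ℕ) [Fact p.Prime] [CharP F p]
    (r l : ℕ) (hl1 : 1 ≤ l) (hl2 : l ≤ r) (hp : p = 4 * r + 3)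
    (α : F) (hord : orderOf α = 2 * (2 * r + 1)) (hα2 : orderOf (α ^ 2) = 2 * r + 1) :
    ∃ C : Submodule F (Fin (2 * r + 1) → F),
      IsConstacyclic (-1 : F) C ∧ IsGaloisLCD p 1 C ∧
      Module.finrank F C = (2 * r + 1) - 2 * l + 1 ∧ IsMinDist C (2 * l) := by
  have hα0 : α ≠ 0 := by
    intro h
    have h2 := pow_orderOf_eq_one α
    rw [hord, h, zero_pow (by omega)] at h2
    exact zero_ne_one h2
  have hαn : α ^ (2 * r + 1) = -1 := by
    have hsq : (α ^ (2 * r + 1)) * (α ^ (2 * r + 1)) = 1 := by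
      rw [← pow_add, show (2*r+1) + (2*r+1) = 2*(2*r+1) by ring, ← hord, pow_orderOf_eq_one]
    rcases mul_self_eq_one_iff.mp hsq with h1 | h1
    · exfalso
      have h2 := orderOf_dvd_iff_pow_eq_one.mpr h1
      rw [hord] at h2
      have := Nat.le_of_dvd (by omega) h2
      omega
    · exact h1
  -- basic objects
  set m := 2 * l - 1 with hm
  set s₀ := r + 1 - l with hs₀
  set γ : ℕ → F := fun i => α ^ (2 * i + 1) with hγ
  have hγ0 : ∀ i, γ i ≠ 0 := fun i => pow_ne_zero _ hα0
  have hγn : ∀ i, γ i ^ (2 * r + 1) = -1 := by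
    intro i
    rw [hγ]
    simp only
    rw [pow_right_comm, hαn, Odd.neg_one_pow ⟨i, by ring⟩]
  have hαp : α ^ p = α := by
    rw [hp, show 4 * r + 3 = 2 * (2 * r + 1) + 1 by ring, pow_add, ← hord,
      pow_orderOf_eq_one, one_mul, pow_one]
  have hγp : ∀ i, γ i ^ p = γ i := by
    intro i
    rw [hγ]
    simp only
    rw [pow_right_comm, hαp]
  -- geometric sum
  have hgeo : ∀ a b : ℕ, a < 2 * r + 1 → b < 2 * r + 1 → a + b + 1 ≠ 2 * r + 1 →
      ∑ j : Fin (2 * r + 1), γ a ^ (j : ℕ) * γ b ^ (j : ℕ) = 0 := by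
    intro a b ha hb hne
    have hx : γ a * γ b = (α ^ 2) ^ (a + b + 1) := by
      rw [hγ]
      simp only
      rw [← pow_add, ← pow_mul]
      congr 1
      ring
    have hsum : ∀ j : Fin (2 * r + 1), γ a ^ (j:ℕ) * γ b ^ (j:ℕ) = ((α ^ 2) ^ (a+b+1)) ^ (j:ℕ) := by
      intro j
      rw [← mul_pow, hx]
    rw [Finset.sum_congr rfl fun j _ => hsum j,
      Fin.sum_univ_eq_sum_range (fun j => ((α ^ 2) ^ (a+b+1)) ^ j) (2*r+1)]
    set x : F := (α ^ 2) ^ (a + b + 1) with hxdef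
    have hx1 : x ≠ 1 := by
      intro h1
      have h2 := orderOf_dvd_iff_pow_eq_one.mpr h1
      rw [hα2] at h2
      obtain ⟨c, hc⟩ := h2
      have hlt : (2 * r + 1) * c < (2 * r + 1) * 2 := by omega
      have hc2 : c < 2 := Nat.lt_of_mul_lt_mul_left hlt
      interval_cases c <;> omega
    have hxn : x ^ (2 * r + 1) = 1 := by
      rw [hxdef, pow_right_comm, ← hα2, pow_orderOf_eq_one, one_pow]
    have hgm := geom_sum_mul x (2 * r + 1)
    rw [hxn, sub_self] at hgm
    rcases mul_eq_zero.mp hgm with h1 | h1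
    · exact h1
    · exact absurd (sub_eq_zero.mp h1) hx1
  -- the code
  have hmlt : m < 2 * r + 1 := by omega
  set Hmat : Matrix (Fin m) (Fin (2 * r + 1)) F :=
    Matrix.of (fun t j => γ (s₀ + (t : ℕ)) ^ (j : ℕ)) with hHmat
  set C := LinearMap.ker Hmat.mulVecLin with hCdef
  have hmemC : ∀ x : Fin (2 * r + 1) → F, x ∈ C ↔
      ∀ t : Fin m, ∑ j : Fin (2 * r + 1), γ (s₀ + (t : ℕ)) ^ (j : ℕ) * x j = 0 := by
    intro x
    rw [hCdef, LinearMap.mem_ker]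
    constructor
    · intro h t
      have h2 := congrFun h t
      simpa [Matrix.mulVecLin_apply, Matrix.mulVec, dotProduct, hHmat] using h2
    · intro h
      funext t
      simpa [Matrix.mulVecLin_apply, Matrix.mulVec, dotProduct, hHmat] using h t
  -- constacyclicity
  have hconst : IsConstacyclic (-1 : F) C := by
    intro c hc
    rw [hmemC] at hc ⊢
    intro t
    exact negacyclic_sum (γ (s₀ + (t : ℕ))) (hγn _) c (hc t)
  -- determinant of the square submatrix
  have hdetSq : (Matrix.of fun t j : Fin m => γ (s₀ + (t : ℕ)) ^ (j : ℕ)).det ≠ 0 := by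
    have hmeq : (Matrix.of fun t j : Fin m => γ (s₀ + (t : ℕ)) ^ (j : ℕ))
        = Matrix.of fun t j : Fin m =>
            α ^ ((2 * (s₀ + (t : ℕ)) + 1) * ((fun j : Fin m => (j : ℕ)) j)) := by
      ext t j
      simp only [Matrix.of_apply, hγ]
      rw [← pow_mul]
    rw [hmeq]
    exact det_aux α hα0 hα2 s₀ (fun j : Fin m => (j : ℕ))
      (fun a b h => Fin.val_injective h) (fun j => lt_of_lt_of_le j.isLt (by omega))
  -- surjectivity of the parity-check map
  have hsurj : Function.Surjective Hmat.mulVecLin := by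
    intro y
    set Msq : Matrix (Fin m) (Fin m) F := Matrix.of fun t j => γ (s₀ + (t : ℕ)) ^ (j : ℕ)
      with hMsq
    have hunit : IsUnit Msq.det := isUnit_iff_ne_zero.mpr hdetSq
    set u : Fin m → F := Msq⁻¹.mulVec y with hu
    refine ⟨fun j : Fin (2 * r + 1) => if h : (j : ℕ) < m then u ⟨j, h⟩ else 0, ?_⟩
    funext t
    rw [Matrix.mulVecLin_apply]
    have e1 : Hmat.mulVec (fun j : Fin (2 * r + 1) => if h : (j : ℕ) < m then u ⟨j, h⟩ else 0) t
        = ∑ j : Fin (2 * r + 1), γ (s₀ + (t : ℕ)) ^ (j : ℕ)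
            * (if h : (j : ℕ) < m then u ⟨j, h⟩ else 0) := by
      simp [Matrix.mulVec, dotProduct, hHmat]
    rw [e1, sum_extend (le_of_lt hmlt) (fun j => γ (s₀ + (t : ℕ)) ^ j) u]
    have e2 : ∑ j : Fin m, γ (s₀ + (t : ℕ)) ^ (j : ℕ) * u j = Msq.mulVec u t := by
      simp [Matrix.mulVec, dotProduct, hMsq]
    rw [e2, hu, Matrix.mulVec_mulVec, Matrix.mul_nonsing_inv _ hunit, Matrix.one_mulVec]
  -- dimension
  have hrank : Module.finrank F C = (2 * r + 1) - 2 * l + 1 := by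
    have h1 := LinearMap.finrank_range_add_finrank_ker Hmat.mulVecLin
    rw [LinearMap.range_eq_top.mpr hsurj, finrank_top, Module.finrank_pi, Module.finrank_pi,
      Fintype.card_fin, Fintype.card_fin] at h1
    rw [← hCdef] at h1
    omega
  -- minimum distance lower bound
  have hlow : ∀ x, x ∈ C → x ≠ 0 → 2 * l ≤ hammingNorm x := by
    intro x hxC hx0
    by_contra hcon
    push_neg at hcon
    have hTcard : (Finset.univ.filter fun j : Fin (2 * r + 1) => x j ≠ 0).card ≤ m := by
      have he : hammingNorm x = (Finset.univ.filter fun j : Fin (2 * r + 1) => x j ≠ 0).card :=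
        rfl
      omega
    obtain ⟨T', hTsub, hT'card⟩ := Finset.exists_superset_card_eq hTcard
      (by rw [Fintype.card_fin]; omega)
    set κ : Fin m → Fin (2 * r + 1) := fun t => ((T'.orderIsoOfFin hT'card t) : Fin (2 * r + 1))
      with hκ
    have hκinj : Function.Injective κ := fun a b h =>
      (T'.orderIsoOfFin hT'card).injective (Subtype.val_injective h)
    set B : Matrix (Fin m) (Fin m) F :=
      Matrix.of fun t t' => γ (s₀ + (t : ℕ)) ^ ((κ t' : Fin (2 * r + 1)) : ℕ) with hB
    have hBdet : B.det ≠ 0 := by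
      have hmeq : B = Matrix.of fun t t' : Fin m =>
          α ^ ((2 * (s₀ + (t : ℕ)) + 1) * ((fun t' : Fin m => ((κ t' : Fin (2*r+1)) : ℕ)) t')) := by
        ext t t'
        simp only [hB, Matrix.of_apply, hγ]
        rw [← pow_mul]
      rw [hmeq]
      exact det_aux α hα0 hα2 s₀ _
        (fun a b h => hκinj (Fin.val_injective h)) (fun t' => (κ t').isLt)
    set u : Fin m → F := fun t' => x (κ t') with hu
    have hBu : B.mulVec u = 0 := by
      funext t
      simp only [Pi.zero_apply]
      have e1 : B.mulVec u t
          = ∑ t' : Fin m, γ (s₀ + (t : ℕ)) ^ ((κ t' : Fin (2*r+1)) : ℕ) * x (κ t') := by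
        simp [Matrix.mulVec, dotProduct, hB, hu]
      rw [e1]
      have e2 : ∑ t' : Fin m, γ (s₀ + (t : ℕ)) ^ ((κ t' : Fin (2*r+1)) : ℕ) * x (κ t')
          = ∑ j ∈ T', γ (s₀ + (t : ℕ)) ^ (j : ℕ) * x j := by
        rw [← Finset.sum_coe_sort T' (fun j => γ (s₀ + (t : ℕ)) ^ ((j : Fin (2*r+1)) : ℕ) * x j)]
        exact Fintype.sum_equiv (T'.orderIsoOfFin hT'card).toEquiv _ _ (fun t' => rfl)
      rw [e2]
      have e3 : ∑ j ∈ T', γ (s₀ + (t : ℕ)) ^ (j : ℕ) * x j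
          = ∑ j : Fin (2 * r + 1), γ (s₀ + (t : ℕ)) ^ (j : ℕ) * x j := by
        refine Finset.sum_subset (Finset.subset_univ T') fun j _ hj => ?_
        have hxj : x j = 0 := by
          by_contra hxj
          exact hj (hTsub (Finset.mem_filter.mpr ⟨Finset.mem_univ j, hxj⟩))
        rw [hxj, mul_zero]
      rw [e3]
      exact (hmemC x).mp hxC t
    have hu0 : u = 0 := eq_zero_of_mulVec B hBdet u hBu
    apply hx0
    funext j
    by_cases hxj : x j = 0
    · exact hxj
    · exfalso
      have hjT' : j ∈ T' := hTsub (Finset.mem_filter.mpr ⟨Finset.mem_univ j, hxj⟩)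
      have hκj : κ ((T'.orderIsoOfFin hT'card).symm ⟨j, hjT'⟩) = j := by
        simp only [hκ, OrderIso.apply_symm_apply]
      have huj := congrFun hu0 ((T'.orderIsoOfFin hT'card).symm ⟨j, hjT'⟩)
      rw [hu, Pi.zero_apply] at huj
      simp only at huj
      rw [hκj] at huj
      exact hxj huj
  -- a codeword of weight exactly 2l
  have hex : ∃ x ∈ C, x ≠ 0 ∧ hammingNorm x = 2 * l := by
    set K : Matrix (Fin m) (Fin (2 * l)) F := Matrix.of fun t j => γ (s₀ + (t : ℕ)) ^ (j : ℕ)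
      with hK
    have hker : LinearMap.ker K.mulVecLin ≠ ⊥ := by
      intro hbot
      have hinj := LinearMap.ker_eq_bot.mp hbot
      have hle := LinearMap.finrank_le_finrank_of_injective hinj
      rw [Module.finrank_pi, Module.finrank_pi, Fintype.card_fin, Fintype.card_fin] at hle
      omega
    obtain ⟨u, huker, hune⟩ := (Submodule.ne_bot_iff _).mp hker
    set x : Fin (2 * r + 1) → F := fun j => if h : (j : ℕ) < 2 * l then u ⟨j, h⟩ else 0 with hx
    have hxC : x ∈ C := by
      rw [hmemC]
      intro t
      simp only [hx]
      rw [sum_extend (by omega) (fun j => γ (s₀ + (t : ℕ)) ^ j) u]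
      have e1 : ∑ j : Fin (2 * l), γ (s₀ + (t : ℕ)) ^ (j : ℕ) * u j = K.mulVec u t := by
        simp [Matrix.mulVec, dotProduct, hK]
      rw [e1]
      have e2 := LinearMap.mem_ker.mp huker
      rw [Matrix.mulVecLin_apply] at e2
      rw [e2, Pi.zero_apply]
    have hxne : x ≠ 0 := by
      intro h0
      apply hune
      funext j
      have e1 : x ⟨(j : ℕ), by have := j.isLt; omega⟩ = u j := by
        simp only [hx]
        rw [dif_pos j.isLt]
      rw [h0, Pi.zero_apply] at e1
      rw [Pi.zero_apply, ← e1]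
    have hub : hammingNorm x ≤ 2 * l := by
      have hsub : (Finset.univ.filter fun j : Fin (2 * r + 1) => x j ≠ 0)
          ⊆ Finset.univ.image (Fin.castLE (show 2 * l ≤ 2 * r + 1 by omega)) := by
        intro j hj
        rw [Finset.mem_filter] at hj
        have hjlt : (j : ℕ) < 2 * l := by
          by_contra hge
          exact hj.2 (by simp only [hx]; exact dif_neg hge)
        refine Finset.mem_image.mpr ⟨⟨(j : ℕ), hjlt⟩, Finset.mem_univ _, ?_⟩
        ext
        rfl
      calc hammingNorm x ≤ _ := Finset.card_le_card hsub
        _ ≤ Finset.univ.card := Finset.card_image_le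
        _ = 2 * l := by rw [Finset.card_univ, Fintype.card_fin]
    exact ⟨x, hxC, hxne, le_antisymm hub (hlow x hxC hxne)⟩
  -- Galois LCD
  have hlcd : IsGaloisLCD p 1 C := by
    rw [IsGaloisLCD, Submodule.eq_bot_iff]
    intro x hx
    rw [Submodule.mem_inf] at hx
    have hx1 : x ∈ C := hx.1
    have hx2 : ∀ c ∈ C, ∑ i, c i * x i ^ p ^ 1 = 0 := hx.2
    have hall : ∀ i : Fin (2 * r + 1), ∑ j : Fin (2 * r + 1), γ (i : ℕ) ^ (j : ℕ) * x j = 0 := by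
      intro i
      by_cases hiS : ∃ t : Fin m, (i : ℕ) = s₀ + (t : ℕ)
      · obtain ⟨t, ht⟩ := hiS
        rw [ht]
        exact (hmemC x).mp hx1 t
      · push_neg at hiS
        have hiS' : ∀ t : Fin m, (i : ℕ) + (s₀ + (t : ℕ)) + 1 ≠ 2 * r + 1 := by
          intro t heq
          have ht := t.isLt
          have hi := i.isLt
          exact hiS ⟨(i : ℕ) - s₀, by omega⟩ (by simp only [Fin.val_mk]; omega)
        have hcmem : (fun j : Fin (2 * r + 1) => γ (i : ℕ) ^ (j : ℕ)) ∈ C := by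
          rw [hmemC]
          intro t
          exact hgeo (s₀ + (t : ℕ)) (i : ℕ) (by have := t.isLt; omega) i.isLt
            (by have := hiS' t; omega)
        have h2 := hx2 _ hcmem
        rw [pow_one] at h2
        have h3 : (∑ j : Fin (2 * r + 1), γ (i : ℕ) ^ (j : ℕ) * x j) ^ p = 0 := by
          rw [sum_pow_char]
          rw [show (∑ j : Fin (2*r+1), (γ (i:ℕ) ^ (j:ℕ) * x j) ^ p)
              = ∑ j : Fin (2*r+1), γ (i:ℕ) ^ (j:ℕ) * x j ^ p from
            Finset.sum_congr rfl fun j _ => by rw [mul_pow, pow_right_comm, hγp]]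
          exact h2
        exact (pow_eq_zero_iff (Nat.Prime.ne_zero Fact.out)).mp h3
    set G : Matrix (Fin (2 * r + 1)) (Fin (2 * r + 1)) F :=
      Matrix.of fun i j => γ (i : ℕ) ^ (j : ℕ) with hG
    have hGdet : G.det ≠ 0 := by
      have hmeq : G = Matrix.of fun i j : Fin (2 * r + 1) =>
          α ^ ((2 * (0 + (i : ℕ)) + 1) * ((fun j : Fin (2*r+1) => (j : ℕ)) j)) := by
        ext i j
        simp only [hG, Matrix.of_apply, Nat.zero_add, hγ]
        rw [← pow_mul]
      rw [hmeq]
      exact det_aux α hα0 hα2 0 _ (fun a b h => Fin.val_injective h) (fun j => j.isLt)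
    have hGx : G.mulVec x = 0 := by
      funext i
      simp only [Pi.zero_apply]
      have e1 : G.mulVec x i = ∑ j : Fin (2 * r + 1), γ (i : ℕ) ^ (j : ℕ) * x j := by
        simp [Matrix.mulVec, dotProduct, hG]
      rw [e1]
      exact hall i
    exact eq_zero_of_mulVec G hGdet x hGx
  exact ⟨C, hconst, hlcd, hrank, hex, hlow⟩

end AuxNegacyclic

/-- Let `q = p^e` with `e ≥ 2` and `p ≡ 3 (mod 4)` a prime, and take `k = 1`.  For every
`1 ≤ l ≤ (p-3)/4` there exists a negacyclic code over `F_q` that is a `1`-Galois LCD MDS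
code of length `(p-1)/2`, dimension `(p-1)/2 - 2l + 1` and minimum distance `2l`. -/
theorem exists_negacyclic_galoisLCD_MDS_three_mod_four
    (p e : ℕ) [Fact p.Prime] (he : 2 ≤ e) (hp : p % 4 = 3)
    (F : Type*) [Field F] [Fintype F] [DecidableEq F] [CharP F p]
    (hF : Fintype.card F = p ^ e)
    {l : ℕ} (hl1 : 1 ≤ l) (hl2 : l ≤ (p - 3) / 4) :
    ∃ C : Submodule F (Fin ((p - 1) / 2) → F),
      IsConstacyclic (-1 : F) C ∧ IsGaloisLCD p 1 C ∧
      Module.finrank F C = (p - 1) / 2 - 2 * l + 1 ∧ IsMinDist C (2 * l) := by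
  have hp2 : 2 ≤ p := (Fact.out : p.Prime).two_le
  obtain ⟨r, hr⟩ : ∃ r, p = 4 * r + 3 := ⟨p / 4, by omega⟩
  have hl2' : l ≤ r := by omega
  have hrw : (p - 1) / 2 = 2 * r + 1 := by omega
  rw [hrw]
  obtain ⟨g, hg⟩ := IsCyclic.exists_generator (α := Fˣ)
  have hcard : orderOf g = p ^ e - 1 := by
    rw [orderOf_eq_card_of_forall_mem_zpowers hg, Nat.card_eq_fintype_card,
      Fintype.card_units, hF]
  have hq1 : 1 < p ^ e := Nat.one_lt_pow (by omega) (by omega)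
  have hdvd : p - 1 ∣ p ^ e - 1 := by
    have h1 := Nat.sub_dvd_pow_sub_pow p 1 e
    simpa using h1
  set a : Fˣ := g ^ ((p ^ e - 1) / (p - 1)) with ha
  have hka : orderOf a = p - 1 := by
    rw [ha, orderOf_pow, hcard, Nat.gcd_eq_right (Nat.div_dvd_of_dvd hdvd),
      Nat.div_div_self hdvd (by omega)]
  have hordα : orderOf ((a : F)) = 2 * (2 * r + 1) := by
    rw [orderOf_units, hka]; omega
  have hordα2 : orderOf (((a : F)) ^ 2) = 2 * r + 1 := by
    have h1 : ((a : F)) ^ 2 = ((a ^ 2 : Fˣ) : F) := (Units.val_pow_eq_pow_val a 2).symm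
    rw [h1, orderOf_units, orderOf_pow, hka,
      Nat.gcd_eq_right (show 2 ∣ p - 1 by omega)]
    omega
  exact master p r l hl1 hl2' hr (a : F) hordα hordα2
end
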